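/- Let G be a finite group, w a word with w-values of order dividing e in G, and suppose every nilpotent subgroup of G generated by w-values has exponent dividing e. Let S be a normal nilpotent subgroup of G containing no nontrivial w-values, where w is the n-th Engel word. Then every element of G induces a nil-automorphism on S; consequently G/C_G(S) is nilpotent. -/

import Mathlib

open scoped commutatorElement

/-- The iterated Engel commutator: `engelComm g a 0 = g`,
`engelComm g a (n+1) = ⁅engelComm g a n, a⁆`, so `engelComm g a n = [g,ₙ a]`. -/
def engelComm {G : Type*} [Group G] (g a : G) : ℕ → G
  | 0 => g
  | n + 1 => ⁅engelComm g a n, a⁆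

section aux

variable {G : Type*} [Group G]

theorem engelComm_map {G' : Type*} [Group G'] (f : G →* G') (g a : G) (j : ℕ) :
    f (engelComm g a j) = engelComm (f g) (f a) j := by
  induction j with
  | zero => rfl
  | succ j ih => simp only [engelComm, map_commutatorElement, ih]

theorem engelComm_mem {S : Subgroup G} (hS : S.Normal) {g : G} (a : G) (hg : g ∈ S) (j : ℕ) :
    engelComm g a j ∈ S := by
  induction j with
  | zero => exact hg
  | succ j ih =>
    show ⁅engelComm g a j, a⁆ ∈ S
    have h : ⁅engelComm g a j, a⁆ = engelComm g a j * (a * (engelComm g a j)⁻¹ * a⁻¹) := by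
      group
    rw [h]
    exact S.mul_mem ih (hS.conj_mem _ (S.inv_mem ih) a)

end aux

section three
variable {G : Type*} [Group G]

theorem three_subgroups_le {X Y Z N : Subgroup G} (hN : N.Normal)
    (h1 : ⁅⁅Y, Z⁆, X⁆ ≤ N) (h2 : ⁅⁅Z, X⁆, Y⁆ ≤ N) : ⁅⁅X, Y⁆, Z⁆ ≤ N := by
  haveI := hN
  let π := QuotientGroup.mk' N
  have key : ∀ W : Subgroup G, W.map π ≤ ⊥ ↔ W ≤ N := by
    intro W
    rw [le_bot_iff, Subgroup.map_eq_bot_iff, QuotientGroup.ker_mk']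
  rw [← key]
  rw [Subgroup.map_commutator, Subgroup.map_commutator, le_bot_iff]
  apply Subgroup.commutator_commutator_eq_bot_of_rotate
  · rw [← Subgroup.map_commutator, ← Subgroup.map_commutator, ← le_bot_iff, key]
    exact h1
  · rw [← Subgroup.map_commutator, ← Subgroup.map_commutator, ← le_bot_iff, key]
    exact h2

end three

theorem pow_dvd_choose_pow {p k n i : ℕ} (hp : p.Prime) (h1 : 1 ≤ i) (h2 : i < n) :
    p ^ k ∣ (p ^ (k + n)).choose i := by
  set N := p ^ (k + n) with hN
  have hN1 : 1 ≤ N := Nat.one_le_pow _ _ hp.pos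
  -- key identity : N.choose i * i = N * (N-1).choose (i-1)
  have hkey : N.choose i * i = N * (N - 1).choose (i - 1) := by
    obtain ⟨j, rfl⟩ : ∃ j, i = j + 1 := ⟨i - 1, by omega⟩
    obtain ⟨M, hM⟩ : ∃ M, N = M + 1 := ⟨N - 1, by omega⟩
    rw [hM]
    simp only [Nat.add_sub_cancel]
    rw [mul_comm (M + 1) _, ← Nat.add_one_mul_choose_eq]
    ring
  set v := i.factorization p with hv
  have hi0 : i ≠ 0 := by omega
  have hvd : p ^ v ∣ i := Nat.ordProj_dvd i p
  obtain ⟨m, hm⟩ := hvd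
  have hm0 : m ≠ 0 := by rintro rfl; simp at hm; omega
  have hpm : ¬ p ∣ m := by
    have := Nat.not_dvd_ordCompl hp hi0
    rwa [show i / p ^ v = m from by rw [hm]; exact Nat.mul_div_cancel_left m (pow_pos hp.pos _)] at this
  have hvlt : v ≤ n := by
    have h3 : v < 2 ^ v := Nat.lt_two_pow_self
    have h4 : (2:ℕ) ^ v ≤ p ^ v := Nat.pow_le_pow_left hp.two_le v
    have h5 : p ^ v ≤ i := Nat.le_of_dvd (by omega) ⟨m, hm⟩
    omega
  have hdvd : p ^ (k + n) ∣ N.choose i * i := hkey ▸ Dvd.dvd.mul_right (dvd_refl N) _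
  have h6 : N.choose i * i = N.choose i * m * p ^ v := by rw [hm]; ring
  have hsplit : p ^ (k + n) = p ^ (k + n - v) * p ^ v := by
    rw [← pow_add]; congr 1; omega
  have hdvd2 : p ^ (k + n - v) ∣ N.choose i * m := by
    rw [h6, hsplit] at hdvd
    exact (mul_dvd_mul_iff_right (pow_pos hp.pos v).ne').mp hdvd
  have hcop : Nat.Coprime (p ^ (k + n - v)) m :=
    Nat.Coprime.pow_left _ ((Nat.Prime.coprime_iff_not_dvd hp).mpr hpm)
  have := hcop.dvd_of_dvd_mul_right hdvd2
  exact dvd_trans (pow_dvd_pow p (by omega)) this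

section pcrux

variable {G : Type*} [Group G] [Finite G]

theorem pCrux (n p k : ℕ) (hp : p.Prime) (B : Subgroup G) (hB : B.Normal)
    (hab : ∀ x ∈ B, ∀ y ∈ B, x * y = y * x)
    (hexp : ∀ b ∈ B, b ^ p ^ k = 1)
    (hE : ∀ b ∈ B, ∀ g : G, engelComm b g n = 1)
    (hcomm : ⁅B, (⊤ : Subgroup G)⁆ = B) : B = ⊥ := by
  haveI := hB
  haveI : Fact p.Prime := ⟨hp⟩
  letI : CommGroup ↥B :=
    { (inferInstance : Group ↥B) with
      mul_comm := fun a b => Subtype.ext (hab a a.2 b b.2) }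
  set C := Subgroup.centralizer (B : Set G) with hC
  have hCnormal : C.Normal := by
    constructor
    intro c hc g
    rw [Subgroup.mem_centralizer_iff] at hc ⊢
    intro b hb
    have h1 := hc (g⁻¹ * b * g) (by simpa using hB.conj_mem b hb g⁻¹)
    calc b * (g * c * g⁻¹) = g * ((g⁻¹ * b * g) * c) * g⁻¹ := by group
      _ = g * (c * (g⁻¹ * b * g)) * g⁻¹ := by rw [h1]
      _ = (g * c * g⁻¹) * b := by group
  -- every g has p-power order modulo C
  have key : ∀ g : G, g ^ p ^ (k + n) ∈ C := by
    intro g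
    set A := Additive ↥B
    let c : ↥B →* ↥B := (MulAut.conjNormal (H := B) g).toMonoidHom
    let u : AddMonoid.End A := MonoidHom.toAdditive c
    have hu : ∀ b : ↥B, ((Additive.toMul (u (Additive.ofMul b)) : ↥B) : G) = g * b * g⁻¹ := by
      intro b
      exact MulAut.conjNormal_apply g b
    set w : AddMonoid.End A := 1 - u with hwdef
    have hw : ∀ (j : ℕ) (b : ↥B),
        ((Additive.toMul ((w ^ j) (Additive.ofMul b)) : ↥B) : G) = engelComm (b : G) g j := by
      intro j
      induction j with
      | zero => intro b; simp [engelComm]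
      | succ j ih =>
        intro b
        have hstep : (w ^ (j + 1)) (Additive.ofMul b) = w ((w ^ j) (Additive.ofMul b)) := by
          rw [pow_succ']
          rfl
        rw [hstep]
        set y := (w ^ j) (Additive.ofMul b) with hy
        have h1 : w y = y - u y := by
          rw [hwdef]; rfl
        have h2 : ((Additive.toMul (u y) : ↥B) : G) = g * (Additive.toMul y : ↥B) * g⁻¹ := by
          have := hu (Additive.toMul y)
          simpa using this
        show ((Additive.toMul (w y) : ↥B) : G) = ⁅engelComm (b : G) g j, g⁆
        have h3 : Additive.toMul (y - u y) = Additive.toMul y / Additive.toMul (u y) := rfl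
        have h4 : ((Additive.toMul (w y) : ↥B) : G)
            = ((Additive.toMul y : ↥B) : G) * (g * ((Additive.toMul y : ↥B) : G) * g⁻¹)⁻¹ := by
          rw [h1, h3]
          push_cast [div_eq_mul_inv]
          rw [h2]
        rw [h4, hy, ih b]
        group
    have hwn : w ^ n = 0 := by
      refine AddMonoidHom.ext fun x => ?_
      have h1 := hw n (Additive.toMul x)
      rw [hE ((Additive.toMul x : ↥B) : G) (Additive.toMul x).2 g] at h1
      have h2 : (Additive.toMul ((w ^ n) x) : ↥B) = 1 := by
        apply Subtype.ext
        simpa using h1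
      show (w ^ n) x = (0 : AddMonoid.End A) x
      rw [AddMonoid.End.zero_apply, ← toMul_eq_one]
      exact h2
    have hkill : ∀ y : A, (p ^ k) • y = 0 := by
      intro y
      have h1 : (Additive.toMul y : ↥B) ^ p ^ k = 1 := by
        apply Subtype.ext
        push_cast
        exact hexp _ (Additive.toMul y).2
      calc (p ^ k) • y = Additive.ofMul ((Additive.toMul y : ↥B) ^ p ^ k) := rfl
        _ = 0 := by rw [h1]; rfl
    set N := p ^ (k + n) with hNdef
    have hN0 : 0 < N := pow_pos hp.pos _
    have hun : u ^ N = 1 := by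
      have hueq : u = -w + 1 := by rw [hwdef, neg_sub, sub_add_cancel]
      rw [hueq, Commute.add_pow (Commute.one_right (-w)) N,
        Finset.sum_eq_single_of_mem 0 (Finset.mem_range.mpr (by omega))]
      · simp
      · intro i _ hne
        by_cases hcase : n ≤ i
        · have hw0 : w ^ i = 0 := by
            have : w ^ i = w ^ n * w ^ (i - n) := by rw [← pow_add]; congr 1; omega
            rw [this, hwn, zero_mul]
          have : (-w) ^ i = 0 := by
            rw [neg_pow w i, hw0, mul_zero]
          rw [this, zero_mul, zero_mul]
        · have h1i : 1 ≤ i := by omega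
          obtain ⟨d, hd⟩ := pow_dvd_choose_pow (k := k) (n := n) hp h1i (by omega)
          rw [one_pow, mul_one]
          refine AddMonoidHom.ext fun x => ?_
          show ((-w) ^ i * ((N.choose i : ℕ) : AddMonoid.End A)) x = (0 : AddMonoid.End A) x
          rw [AddMonoid.End.zero_apply]
          have hstep : ((-w) ^ i * ((N.choose i : ℕ) : AddMonoid.End A)) x
              = ((-w) ^ i) (((N.choose i : ℕ) : AddMonoid.End A) x) := rfl
          rw [hstep, AddMonoid.End.natCast_apply, hd, mul_smul, hkill, map_zero]
    have hiter : ∀ (j : ℕ) (b : ↥B),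
        ((Additive.toMul ((u ^ j) (Additive.ofMul b)) : ↥B) : G) = g ^ j * b * g⁻¹ ^ j := by
      intro j
      induction j with
      | zero => intro b; simp
      | succ j ih =>
        intro b
        have hstep : (u ^ (j + 1)) (Additive.ofMul b) = u ((u ^ j) (Additive.ofMul b)) := by
          rw [pow_succ']
          rfl
        rw [hstep]
        have h2 := hu (Additive.toMul ((u ^ j) (Additive.ofMul b)))
        rw [show Additive.ofMul (Additive.toMul ((u ^ j) (Additive.ofMul b)))
            = (u ^ j) (Additive.ofMul b) from rfl] at h2
        rw [h2, ih b, pow_succ' g j, pow_succ g⁻¹ j]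
        simp only [mul_assoc]
    rw [hC]
    rw [Subgroup.mem_centralizer_iff]
    intro b hb
    have h3 := hiter N ⟨b, hb⟩
    rw [hun] at h3
    rw [AddMonoid.End.one_apply] at h3
    simp only [toMul_ofMul] at h3
    rw [inv_pow] at h3
    have h4 : g ^ N * b * (g ^ N)⁻¹ = b := h3.symm
    rw [mul_inv_eq_iff_eq_mul] at h4
    exact h4.symm
  haveI := hCnormal
  have hQ : IsPGroup p (G ⧸ C) := by
    intro q
    obtain ⟨g, rfl⟩ := QuotientGroup.mk_surjective q
    refine ⟨k + n, ?_⟩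
    have h5 : ((QuotientGroup.mk' C) g) ^ p ^ (k + n)
        = (QuotientGroup.mk' C) (g ^ p ^ (k + n)) := (map_pow _ _ _).symm
    rw [show (QuotientGroup.mk g : G ⧸ C) = (QuotientGroup.mk' C) g from rfl, h5]
    exact (QuotientGroup.eq_one_iff _).mpr (key g)
  obtain ⟨P⟩ := (inferInstance : Nonempty (Sylow p G))
  have hPsup : C ⊔ (P : Subgroup G) = ⊤ := by
    have h1 : (C ⊔ (P : Subgroup G)).index ∣ C.index := Subgroup.index_dvd_of_le le_sup_left
    have h2 : (C ⊔ (P : Subgroup G)).index ∣ (P : Subgroup G).index :=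
      Subgroup.index_dvd_of_le le_sup_right
    obtain ⟨a, ha⟩ : ∃ a, C.index = p ^ a := hQ.exists_card_eq
    obtain ⟨b, hble, hb⟩ := (Nat.dvd_prime_pow hp).mp (ha ▸ h1)
    have hpP : ¬ p ∣ (P : Subgroup G).index := P.not_dvd_index
    rcases Nat.eq_zero_or_pos b with hb0 | hb1
    · apply Subgroup.index_eq_one.mp
      rw [hb, hb0, pow_zero]
    · exfalso
      exact hpP (dvd_trans (hb ▸ dvd_pow_self p hb1.ne') h2)
  have hBP : B = ⁅B, (P : Subgroup G)⁆ := by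
    have hle : ⁅B, (⊤ : Subgroup G)⁆ ≤ ⁅B, (P : Subgroup G)⁆ := by
      rw [Subgroup.commutator_le]
      intro b hb x _
      have hx : x ∈ C ⊔ (P : Subgroup G) := by rw [hPsup]; trivial
      rw [← SetLike.mem_coe, Subgroup.normal_mul] at hx
      obtain ⟨cc, hcc, uu, huu, rfl⟩ := hx
      have hbc : b * cc = cc * b := (Subgroup.mem_centralizer_iff.mp hcc) b hb
      have hc1 : ⁅b, cc * uu⁆ = cc * ⁅b, uu⁆ * cc⁻¹ := by
        rw [commutatorElement_def, commutatorElement_def]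
        calc b * (cc * uu) * b⁻¹ * (cc * uu)⁻¹ = (b * cc) * (uu * b⁻¹ * uu⁻¹ * cc⁻¹) := by
              group
          _ = (cc * b) * (uu * b⁻¹ * uu⁻¹ * cc⁻¹) := by rw [hbc]
          _ = cc * (b * uu * b⁻¹ * uu⁻¹) * cc⁻¹ := by group
      have h5 : ⁅b, uu⁆ ∈ B := by
        rw [show ⁅b, uu⁆ = b * (uu * b⁻¹ * uu⁻¹) from by group]
        exact B.mul_mem hb (hB.conj_mem _ (B.inv_mem hb) uu)
      have hX : ⁅b, uu⁆ * cc = cc * ⁅b, uu⁆ := (Subgroup.mem_centralizer_iff.mp hcc) _ h5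
      have h6 : cc * ⁅b, uu⁆ * cc⁻¹ = ⁅b, uu⁆ := by rw [← hX]; group
      rw [hc1, h6]
      exact Subgroup.commutator_mem_commutator hb huu
    have hge : ⁅B, (P : Subgroup G)⁆ ≤ B := by
      have h7 := Subgroup.commutator_mono (le_refl B) (le_top (a := (P : Subgroup G)))
      rwa [hcomm] at h7
    refine le_antisymm ?_ hge
    refine fun x hx => hle ?_
    rw [hcomm]
    exact hx
  have hBpg : IsPGroup p ↥B := by
    intro b
    refine ⟨k, ?_⟩
    apply Subtype.ext
    push_cast
    exact hexp _ b.2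
  have hHpg : IsPGroup p ↥((P : Subgroup G) ⊔ B) :=
    IsPGroup.to_sup_of_normal_right P.isPGroup' hBpg
  haveI hHnil : Group.IsNilpotent ↥((P : Subgroup G) ⊔ B) := hHpg.isNilpotent
  obtain ⟨m, hm⟩ := Subgroup.nilpotent_iff_lowerCentralSeries.mp hHnil
  set H := (P : Subgroup G) ⊔ B with hH2
  have hrange : Subgroup.map H.subtype ⊤ = H := by
    rw [← MonoidHom.range_eq_map, Subgroup.range_subtype]
  have hmap : ∀ j : ℕ, B ≤ Subgroup.map H.subtype ((⊤ : Subgroup ↥H).lowerCentralSeries j) := by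
    intro j
    induction j with
    | zero =>
      rw [Subgroup.lowerCentralSeries_zero, hrange]
      exact le_sup_right
    | succ j ih =>
      calc B = ⁅B, (P : Subgroup G)⁆ := hBP
        _ ≤ ⁅Subgroup.map H.subtype ((⊤ : Subgroup ↥H).lowerCentralSeries j), Subgroup.map H.subtype ⊤⁆ :=
            Subgroup.commutator_mono ih (by rw [hrange]; exact le_sup_left)
        _ = Subgroup.map H.subtype ⁅(⊤ : Subgroup ↥H).lowerCentralSeries j, ⊤⁆ :=
            (Subgroup.map_commutator _ _ _).symm
        _ = Subgroup.map H.subtype ((⊤ : Subgroup ↥H).lowerCentralSeries (j + 1)) := rfl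
  have hfin := hmap m
  rw [hm, Subgroup.map_bot] at hfin
  exact le_bot_iff.mp hfin


theorem abelianCrux (n : ℕ) (A : Subgroup G) (hA : A.Normal)
    (hab : ∀ x ∈ A, ∀ y ∈ A, x * y = y * x)
    (hE : ∀ a ∈ A, ∀ g : G, engelComm a g n = 1)
    (hcomm : ⁅A, (⊤ : Subgroup G)⁆ = A) : A = ⊥ := by
  by_contra hA0
  haveI hAnt : Nontrivial ↥A := (Subgroup.nontrivial_iff_ne_bot A).mpr hA0
  have hcard1 : 1 < Nat.card ↥A := Finite.one_lt_card
  obtain ⟨p, hp, hpdvd⟩ := Nat.exists_prime_and_dvd (n := Nat.card ↥A) (by omega)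
  haveI : Fact p.Prime := ⟨hp⟩
  set k := (Nat.card ↥A).factorization p with hk
  set m := (Nat.card ↥A) / p ^ k with hm
  have hcard0 : Nat.card ↥A ≠ 0 := by omega
  have hcard : p ^ k * m = Nat.card ↥A := Nat.ordProj_mul_ordCompl_eq_self _ p
  have hpm : ¬ p ∣ m := Nat.not_dvd_ordCompl hp hcard0
  have hk1 : 1 ≤ k := hp.factorization_pos_of_dvd hcard0 hpdvd
  -- the p-torsion subgroup
  have hmulmem : ∀ x ∈ A, ∀ y ∈ A, x ^ p ^ k = 1 → y ^ p ^ k = 1 → (x * y) ^ p ^ k = 1 := by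
    intro x hx y hy h1 h2
    have hcxy : Commute x y := hab x hx y hy
    rw [hcxy.mul_pow, h1, h2, one_mul]
  let B : Subgroup G :=
    { carrier := {x | x ∈ A ∧ x ^ p ^ k = 1}
      mul_mem' := fun hx hy => ⟨A.mul_mem hx.1 hy.1, hmulmem _ hx.1 _ hy.1 hx.2 hy.2⟩
      one_mem' := ⟨A.one_mem, one_pow _⟩
      inv_mem' := fun hx => ⟨A.inv_mem hx.1, by rw [inv_pow, hx.2, inv_one]⟩ }
  have hBmem : ∀ x, x ∈ B ↔ x ∈ A ∧ x ^ p ^ k = 1 := fun _ => Iff.rfl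
  have hBA : B ≤ A := fun x hx => ((hBmem x).mp hx).1
  have hBnormal : B.Normal := by
    constructor
    intro x hx g
    obtain ⟨hx1, hx2⟩ := (hBmem x).mp hx
    refine (hBmem _).mpr ⟨hA.conj_mem x hx1 g, ?_⟩
    rw [conj_pow, hx2, mul_one, mul_inv_cancel]
  -- x ∈ A has order dividing card A
  have hApow : ∀ x ∈ A, x ^ (Nat.card ↥A) = 1 := by
    intro x hx
    have h1 : (⟨x, hx⟩ : ↥A) ^ (Nat.card ↥A) = 1 := pow_card_eq_one'
    have := congrArg (Subtype.val) h1
    push_cast at this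
    exact this
  -- Bezout
  have hco : Nat.Coprime (p ^ k) m := Nat.Coprime.pow_left _ ((hp.coprime_iff_not_dvd).mpr hpm)
  set z : ℤ := m * Nat.gcdB (p ^ k) m with hz
  have hbez : 1 = (p ^ k : ℤ) * Nat.gcdA (p ^ k) m + z := by
    rw [hz]
    have := Nat.gcd_eq_gcd_ab (p ^ k) m
    rw [hco] at this
    push_cast at this
    exact this
  have hKey1 : ∀ x ∈ A, x ^ z ∈ B := by
    intro x hx
    refine (hBmem _).mpr ⟨A.zpow_mem hx z, ?_⟩
    have h1 : (x ^ z) ^ p ^ k = x ^ (z * ((p ^ k : ℕ) : ℤ)) := by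
      rw [← zpow_natCast (x ^ z), ← zpow_mul]
    rw [h1, hz]
    have h2 : (m : ℤ) * Nat.gcdB (p ^ k) m * ((p ^ k : ℕ) : ℤ)
        = (Nat.card ↥A : ℤ) * Nat.gcdB (p ^ k) m := by
      rw [← hcard]
      push_cast
      ring
    rw [h2, zpow_mul, zpow_natCast, hApow x hx, one_zpow]
  have hKey2 : ∀ x ∈ B, x ^ z = x := by
    intro x hx
    obtain ⟨hx1, hx2⟩ := (hBmem x).mp hx
    have h1 : x ^ z = x ^ (1 - ((p ^ k : ℕ) : ℤ) * Nat.gcdA (p ^ k) m) := by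
      congr 1
      push_cast
      linarith [hbez]
    rw [h1, zpow_sub, zpow_one, zpow_mul, zpow_natCast, hx2]
    simp
  have hKey3 : ∀ x ∈ A, ∀ g : G, ⁅x, g⁆ ^ z = ⁅x ^ z, g⁆ := by
    intro x hx g
    have hy : g * x⁻¹ * g⁻¹ ∈ A := by simpa using hA.conj_mem x⁻¹ (A.inv_mem hx) g
    have hcxy : Commute x (g * x⁻¹ * g⁻¹) := hab x hx _ hy
    have h1 : ⁅x, g⁆ = x * (g * x⁻¹ * g⁻¹) := by group
    rw [h1, hcxy.mul_zpow, conj_zpow, inv_zpow]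
    have h2 : ⁅x ^ z, g⁆ = x ^ z * (g * (x ^ z)⁻¹ * g⁻¹) := by group
    rw [h2]
  -- commutator of A member with anything stays in A
  have hAcomm : ∀ x ∈ A, ∀ g : G, ⁅x, g⁆ ∈ A := by
    intro x hx g
    rw [show ⁅x, g⁆ = x * (g * x⁻¹ * g⁻¹) from by group]
    exact A.mul_mem hx (by simpa using hA.conj_mem x⁻¹ (A.inv_mem hx) g)
  have hBcommutator : ⁅B, (⊤ : Subgroup G)⁆ = B := by
    apply le_antisymm
    · rw [Subgroup.commutator_le]
      intro b hb g _
      obtain ⟨hb1, hb2⟩ := (hBmem b).mp hb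
      refine (hBmem _).mpr ⟨hAcomm b hb1 g, ?_⟩
      have hy : g * b⁻¹ * g⁻¹ ∈ A := by simpa using hA.conj_mem b⁻¹ (A.inv_mem hb1) g
      have hcxy : Commute b (g * b⁻¹ * g⁻¹) := hab b hb1 _ hy
      rw [show ⁅b, g⁆ = b * (g * b⁻¹ * g⁻¹) from by group, hcxy.mul_pow, conj_pow, inv_pow,
        hb2, inv_one, mul_one, mul_inv_cancel, one_mul]
    · intro b hb
      obtain ⟨hb1, hb2⟩ := (hBmem b).mp hb
      have hbmem : b ∈ ⁅A, (⊤ : Subgroup G)⁆ := by rw [hcomm]; exact hb1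
      have hind : b ∈ A ∧ b ^ z ∈ ⁅B, (⊤ : Subgroup G)⁆ := by
        refine Subgroup.closure_induction ?_ ?_ ?_ ?_ hbmem
        · rintro x ⟨g₁, hg₁, g₂, _, rfl⟩
          refine ⟨hAcomm g₁ hg₁ g₂, ?_⟩
          rw [hKey3 g₁ hg₁ g₂]
          exact Subgroup.commutator_mem_commutator (hKey1 g₁ hg₁) trivial
        · exact ⟨A.one_mem, by rw [one_zpow]; exact Subgroup.one_mem _⟩
        · rintro x y _ _ ⟨hx1, hx2⟩ ⟨hy1, hy2⟩
          refine ⟨A.mul_mem hx1 hy1, ?_⟩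
          have hcxy : Commute x y := hab x hx1 y hy1
          rw [hcxy.mul_zpow]
          exact Subgroup.mul_mem _ hx2 hy2
        · rintro x _ ⟨hx1, hx2⟩
          exact ⟨A.inv_mem hx1, by rw [inv_zpow]; exact Subgroup.inv_mem _ hx2⟩
      have := hind.2
      rwa [hKey2 b hb] at this
  -- B is trivial by pCrux
  have hBbot : B = ⊥ := by
    refine pCrux n p k hp B hBnormal ?_ ?_ ?_ hBcommutator
    · intro x hx y hy
      exact hab x (hBA hx) y (hBA hy)
    · intro b hb
      exact ((hBmem b).mp hb).2
    · intro b hb g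
      exact hE b (hBA hb) g
  -- but B is nontrivial by Cauchy
  obtain ⟨x, hx⟩ := exists_prime_orderOf_dvd_card' (G := ↥A) p hpdvd
  have hxne : (x : G) ≠ 1 := by
    intro hcontr
    have : x = 1 := Subtype.ext (by simpa using hcontr)
    rw [this, orderOf_one] at hx
    exact hp.one_lt.ne' hx.symm
  have hxB : (x : G) ∈ B := by
    refine (hBmem _).mpr ⟨x.2, ?_⟩
    have h1 : (x : G) ^ p = 1 := by
      have := pow_orderOf_eq_one x
      rw [hx] at this
      have := congrArg Subtype.val this
      push_cast at this
      exact this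
    have h2 : p ^ k = p * p ^ (k - 1) := by
      rw [← pow_succ']
      congr 1
      omega
    rw [h2, pow_mul, h1, one_pow]
  rw [hBbot] at hxB
  exact hxne (Subgroup.mem_bot.mp hxB)

theorem crux (n : ℕ) (T : Subgroup G) (hT : T.Normal) (hTnil : Group.IsNilpotent ↥T)
    (hE : ∀ t ∈ T, ∀ g : G, engelComm t g n = 1)
    (hcomm : ⁅T, (⊤ : Subgroup G)⁆ = T) : T = ⊥ := by
  haveI := hT
  haveI : Subgroup.Normal ⁅T, T⁆ := Subgroup.commutator_normal T T
  set π := QuotientGroup.mk' ⁅T, T⁆ with hπ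
  have hsurj : Function.Surjective π := QuotientGroup.mk'_surjective _
  set A := T.map π with hA
  have hAnormal : A.Normal := hT.map π hsurj
  have hab : ∀ x ∈ A, ∀ y ∈ A, x * y = y * x := by
    intro x hx y hy
    obtain ⟨a, ha, rfl⟩ := Subgroup.mem_map.mp hx
    obtain ⟨b, hb, rfl⟩ := Subgroup.mem_map.mp hy
    rw [← commutatorElement_eq_one_iff_mul_comm, ← map_commutatorElement]
    exact (QuotientGroup.eq_one_iff _).mpr (Subgroup.commutator_mem_commutator ha hb)
  have hEq : ∀ a ∈ A, ∀ q : G ⧸ ⁅T, T⁆, engelComm a q n = 1 := by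
    intro a ha q
    obtain ⟨t, ht, rfl⟩ := Subgroup.mem_map.mp ha
    obtain ⟨g, rfl⟩ := hsurj q
    rw [← engelComm_map, hE t ht g, map_one]
  have hAcomm : ⁅A, (⊤ : Subgroup (G ⧸ ⁅T, T⁆))⁆ = A := by
    have h1 : Subgroup.map π ⊤ = ⊤ := by
      rw [← MonoidHom.range_eq_map]
      exact MonoidHom.range_eq_top_of_surjective π hsurj
    calc ⁅A, (⊤ : Subgroup _)⁆ = ⁅T.map π, Subgroup.map π ⊤⁆ := by rw [h1, hA]
      _ = Subgroup.map π ⁅T, ⊤⁆ := (Subgroup.map_commutator _ _ _).symm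
      _ = A := by rw [hcomm, hA]
  have hAbot : A = ⊥ := abelianCrux n A hAnormal hab hEq hAcomm
  have hTsub : T ≤ ⁅T, T⁆ := by
    have h2 := (Subgroup.map_eq_bot_iff T (f := π)).mp (by rw [← hA]; exact hAbot)
    rwa [QuotientGroup.ker_mk'] at h2
  obtain ⟨m, hm⟩ := Subgroup.nilpotent_iff_lowerCentralSeries.mp hTnil
  have hrange : Subgroup.map T.subtype ⊤ = T := by
    rw [← MonoidHom.range_eq_map, Subgroup.range_subtype]
  have hmap : ∀ j : ℕ, T ≤ Subgroup.map T.subtype ((⊤ : Subgroup ↥T).lowerCentralSeries j) := by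
    intro j
    induction j with
    | zero => rw [Subgroup.lowerCentralSeries_zero, hrange]
    | succ j ih =>
      calc T ≤ ⁅T, T⁆ := hTsub
        _ ≤ ⁅Subgroup.map T.subtype ((⊤ : Subgroup ↥T).lowerCentralSeries j), Subgroup.map T.subtype ⊤⁆ :=
            Subgroup.commutator_mono ih (le_of_eq hrange.symm)
        _ = Subgroup.map T.subtype ⁅(⊤ : Subgroup ↥T).lowerCentralSeries j, ⊤⁆ :=
            (Subgroup.map_commutator _ _ _).symm
        _ = Subgroup.map T.subtype ((⊤ : Subgroup ↥T).lowerCentralSeries (j + 1)) := rfl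
  have hfin := hmap m
  rw [hm, Subgroup.map_bot] at hfin
  exact le_bot_iff.mp hfin

end pcrux

def Dser {G : Type*} [Group G] (S : Subgroup G) : ℕ → Subgroup G
  | 0 => S
  | i + 1 => ⁅Dser S i, ⊤⁆

theorem Dser_succ {G : Type*} [Group G] (S : Subgroup G) (i : ℕ) :
    Dser S (i + 1) = ⁅Dser S i, ⊤⁆ := rfl

theorem Dser_normal {G : Type*} [Group G] {S : Subgroup G} (hS : S.Normal) (i : ℕ) :
    (Dser S i).Normal := by
  induction i with
  | zero => exact hS
  | succ i ih => exact @Subgroup.commutator_normal _ _ (Dser S i) ⊤ ih _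

theorem Dser_le {G : Type*} [Group G] {S : Subgroup G} (hS : S.Normal) (i : ℕ) :
    Dser S i ≤ S := by
  induction i with
  | zero => exact le_rfl
  | succ i ih =>
    haveI := Dser_normal hS i
    exact le_trans (Subgroup.commutator_le_left _ _) ih


/-- Let `w` be the `n`-th Engel word (`n ≥ 1`) and `G` a finite group in which
all `w`-values have order dividing `e` and every nilpotent subgroup generated
by `w`-values has exponent dividing `e`.  Let `S` be a normal nilpotent
subgroup of `G` containing no nontrivial `w`-values of `G`.  Then every element
of `G` induces a nil-automorphism of `S` (indeed `[s,ₙ a] = 1` for all `a ∈ G`,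
`s ∈ S`) and `G/C_G(S)` is nilpotent. -/
theorem stmt16 (G : Type) [Group G] [Finite G] (n e : ℕ) (hn : 1 ≤ n)
    (he : 0 < e)
    (horder : ∀ g a : G, engelComm g a n ^ e = 1)
    (hnilp : ∀ H : Subgroup G, Group.IsNilpotent ↥H →
      (∃ S : Set G, (∀ x ∈ S, ∃ g a : G, x = engelComm g a n) ∧
        Subgroup.closure S = H) →
      ∀ h ∈ H, h ^ e = 1)
    (S : Subgroup G) (hSnormal : S.Normal) (hSnilp : Group.IsNilpotent ↥S)
    (hnoval : ∀ g a : G, engelComm g a n ∈ S → engelComm g a n = 1) :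
    (∀ a : G, ∀ s ∈ S, engelComm s a n = 1) ∧
      ∃ c, (⊤ : Subgroup G).lowerCentralSeries c ≤ Subgroup.centralizer (S : Set G) := by
  have h1 : ∀ a : G, ∀ s ∈ S, engelComm s a n = 1 := fun a s hs =>
    hnoval s a (engelComm_mem hSnormal a hs n)
  refine ⟨h1, ?_⟩
  have hnormal : ∀ i, (Dser S i).Normal := Dser_normal hSnormal
  have hle : ∀ i, Dser S i ≤ S := Dser_le hSnormal
  have hdec : ∀ i, Dser S (i + 1) ≤ Dser S i := fun i => by
    haveI := hnormal i
    exact Subgroup.commutator_le_left _ _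
  have hstab : ∃ c, Dser S (c + 1) = Dser S c := by
    by_contra hcon
    push_neg at hcon
    have hlt : ∀ i, Nat.card (Dser S (i + 1)) < Nat.card (Dser S i) := by
      intro i
      have hle2 : Nat.card (Dser S (i + 1)) ≤ Nat.card (Dser S i) :=
        Subgroup.card_le_of_le (hdec i)
      rcases lt_or_eq_of_le hle2 with h | h
      · exact h
      · exact absurd (Subgroup.eq_of_le_of_card_ge (hdec i) (le_of_eq h.symm)) (hcon i)
    have hsum : ∀ i, Nat.card (Dser S i) + i ≤ Nat.card (Dser S 0) := by
      intro i
      induction i with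
      | zero => omega
      | succ i ih =>
        have := hlt i
        omega
    have := hsum (Nat.card (Dser S 0) + 1)
    omega
  obtain ⟨c, hc⟩ := hstab
  have hTnil : Group.IsNilpotent ↥(Dser S c) := by
    haveI := hSnilp
    haveI : Group.IsNilpotent ↥((Dser S c).subgroupOf S) := Subgroup.isNilpotent _
    exact nilpotent_of_mulEquiv (Subgroup.subgroupOfEquivOfLe (hle c))
  have hbot : Dser S c = ⊥ := by
    refine crux n (Dser S c) (hnormal c) hTnil ?_ ?_
    · intro t ht g
      exact h1 g t (hle c ht)
    · rw [← Dser_succ]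
      exact hc
  have h3 : ∀ j i, ⁅(⊤ : Subgroup G).lowerCentralSeries j, Dser S i⁆ ≤ Dser S (i + j + 1) := by
    intro j
    induction j with
    | zero =>
      intro i
      rw [Subgroup.lowerCentralSeries_zero, Subgroup.commutator_comm]
      rw [show i + 0 + 1 = i + 1 from by omega, ← Dser_succ]
    | succ j ih =>
      intro i
      have e1 : ⁅⁅(⊤ : Subgroup G), Dser S i⁆, (⊤ : Subgroup G).lowerCentralSeries j⁆ ≤ Dser S (i + j + 2) := by
        have h4 : ⁅(⊤ : Subgroup G), Dser S i⁆ = Dser S (i + 1) := by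
          rw [Subgroup.commutator_comm, ← Dser_succ]
        rw [h4, Subgroup.commutator_comm]
        have h5 := ih (i + 1)
        rwa [show i + 1 + j + 1 = i + j + 2 from by omega] at h5
      have e2 : ⁅⁅Dser S i, (⊤ : Subgroup G).lowerCentralSeries j⁆, (⊤ : Subgroup G)⁆ ≤ Dser S (i + j + 2) := by
        have h4 : ⁅Dser S i, (⊤ : Subgroup G).lowerCentralSeries j⁆ ≤ Dser S (i + j + 1) := by
          rw [Subgroup.commutator_comm]
          exact ih i
        calc ⁅⁅Dser S i, (⊤ : Subgroup G).lowerCentralSeries j⁆, (⊤ : Subgroup G)⁆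
            ≤ ⁅Dser S (i + j + 1), ⊤⁆ := Subgroup.commutator_mono h4 le_rfl
          _ = Dser S (i + j + 2) := (Dser_succ S (i + j + 1)).symm
      have h6 := three_subgroups_le (hnormal (i + j + 2)) e1 e2
      rwa [show i + (j + 1) + 1 = i + j + 2 from by omega]
  refine ⟨c, ?_⟩
  intro g hg
  rw [Subgroup.mem_centralizer_iff]
  intro s hs
  have h5 : ⁅g, s⁆ ∈ ⁅(⊤ : Subgroup G).lowerCentralSeries c, Dser S 0⁆ :=
    Subgroup.commutator_mem_commutator hg hs
  have h6 := h3 c 0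
  rw [show (0 : ℕ) + c + 1 = c + 1 from by omega, hc, hbot] at h6
  have h7 := h6 h5
  rw [Subgroup.mem_bot, commutatorElement_eq_one_iff_mul_comm] at h7
  exact h7.symm
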